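/- For every matrix D ∈ USD₂ ∩ SIM₂ it holds that W(D) = −D₁,₁ − D₁,₂ + D₃,₂ + D₃,₃ ≥ 0. -/

import Mathlib

open Matrix
open scoped ComplexOrder

/-- A qubit state: a positive semidefinite 2×2 complex matrix with trace 1. -/
def QubitState (ρ : Matrix (Fin 2) (Fin 2) ℂ) : Prop :=
  ρ.PosSemidef ∧ ρ.trace = 1

/-- A qubit effect: a 2×2 complex matrix `E` with both `E` and `1 - E` positive semidefinite. -/
def QubitEffect (E : Matrix (Fin 2) (Fin 2) ℂ) : Prop :=
  E.PosSemidef ∧ (1 - E).PosSemidef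

/-- A realization of a 3×3 correlation matrix `P` by three qubit states, a three-outcome
qubit POVM `(M11, M21, M31)` and a two-outcome qubit POVM `(M12, M22)`. -/
def IsRealization (P : Matrix (Fin 3) (Fin 3) ℝ)
    (ρ : Fin 3 → Matrix (Fin 2) (Fin 2) ℂ)
    (M11 M21 M31 M12 M22 : Matrix (Fin 2) (Fin 2) ℂ) : Prop :=
  (∀ x, QubitState (ρ x)) ∧
  QubitEffect M11 ∧ QubitEffect M21 ∧ QubitEffect M31 ∧
  M11 + M21 + M31 = 1 ∧
  QubitEffect M12 ∧ QubitEffect M22 ∧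
  M12 + M22 = 1 ∧
  (∀ x, P x 0 = ((ρ x * M11).trace).re ∧
        P x 1 = ((ρ x * M21).trace).re ∧
        P x 2 = ((ρ x * M12).trace).re)

/-- The USD pattern of zeros and ones of the correlation matrix, Eq. (3). -/
def USDpattern (P : Matrix (Fin 3) (Fin 3) ℝ) : Prop :=
  P 0 2 = 0 ∧ P 1 1 = 0 ∧ P 1 2 = 1 ∧ P 2 0 = 0

/-- The set USD₂ of qubit USD correlations. -/
def USD2 (P : Matrix (Fin 3) (Fin 3) ℝ) : Prop :=
  USDpattern P ∧
  ∃ ρ M11 M21 M31 M12 M22, IsRealization P ρ M11 M21 M31 M12 M22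

/-- A three-outcome qubit POVM is simulable by dichotomic measurements, Eq. (1). -/
def Simulable (M11 M21 M31 : Matrix (Fin 2) (Fin 2) ℂ) : Prop :=
  ∃ p1 p2 p3 : ℝ, ∃ N11 N22 N13 : Matrix (Fin 2) (Fin 2) ℂ,
    0 ≤ p1 ∧ 0 ≤ p2 ∧ 0 ≤ p3 ∧ p1 + p2 + p3 = 1 ∧
    QubitEffect N11 ∧ QubitEffect N22 ∧ QubitEffect N13 ∧
    M11 = p1 • N11 + p3 • N13 ∧
    M21 = p1 • (1 - N11) + p2 • N22 ∧
    M31 = p2 • (1 - N22) + p3 • (1 - N13)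

/-- The set SIM₂ of simulable trichotomic qubit correlations in the minimal scenario. -/
def SIM2 (P : Matrix (Fin 3) (Fin 3) ℝ) : Prop :=
  ∃ ρ M11 M21 M31 M12 M22, IsRealization P ρ M11 M21 M31 M12 M22 ∧
    Simulable M11 M21 M31

/-- The parameterized USD correlation matrix 𝒫(p, q, ξ) of Eq. (4). -/
noncomputable def Pmat (p q ξ : ℝ) : Matrix (Fin 3) (Fin 3) ℝ :=
  !![p * ξ,       q,           0;
     p * (1 - ξ), 0,           1;
     0,           q * (1 - ξ), ξ]

section Aux
abbrev M2' := Matrix (Fin 2) (Fin 2) ℂ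

lemma tr_selfmul (X : M2') :
    (Xᴴ * X).trace = (Complex.normSq (X 0 0) + Complex.normSq (X 0 1)
      + Complex.normSq (X 1 0) + Complex.normSq (X 1 1) : ℝ) := by
  simp [Matrix.trace_fin_two, Matrix.mul_apply, Fin.sum_univ_two,
    Matrix.conjTranspose_apply, Complex.ext_iff, Complex.normSq_apply]
  constructor <;> ring

lemma tr_selfmul_re (X : M2') :
    (Xᴴ * X).trace.re = Complex.normSq (X 0 0) + Complex.normSq (X 0 1)
      + Complex.normSq (X 1 0) + Complex.normSq (X 1 1) := by
  rw [tr_selfmul]; simp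

lemma tr_selfmul_re_nonneg (X : M2') : 0 ≤ (Xᴴ * X).trace.re := by
  rw [tr_selfmul_re]
  have := Complex.normSq_nonneg (X 0 0)
  have := Complex.normSq_nonneg (X 0 1)
  have := Complex.normSq_nonneg (X 1 0)
  have := Complex.normSq_nonneg (X 1 1)
  linarith

lemma tr_selfmul_eq_zero (X : M2') (h : (Xᴴ * X).trace.re = 0) : X = 0 := by
  rw [tr_selfmul_re] at h
  have h0 := Complex.normSq_nonneg (X 0 0)
  have h1 := Complex.normSq_nonneg (X 0 1)
  have h2 := Complex.normSq_nonneg (X 1 0)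
  have h3 := Complex.normSq_nonneg (X 1 1)
  have e0 : X 0 0 = 0 := Complex.normSq_eq_zero.mp (by linarith)
  have e1 : X 0 1 = 0 := Complex.normSq_eq_zero.mp (by linarith)
  have e2 : X 1 0 = 0 := Complex.normSq_eq_zero.mp (by linarith)
  have e3 : X 1 1 = 0 := Complex.normSq_eq_zero.mp (by linarith)
  ext i j
  fin_cases i <;> fin_cases j <;> simpa

lemma psd_trace_key {A B : M2'} (hA : A.PosSemidef) (hB : B.PosSemidef) :
    (A * B).trace = (((A * B).trace.re : ℝ) : ℂ) ∧ 0 ≤ (A * B).trace.re ∧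
      ((A * B).trace.re = 0 → A * B = 0) := by
  obtain ⟨C, rfl⟩ := (by open scoped MatrixOrder Matrix.Norms.L2Operator in exact CStarAlgebra.nonneg_iff_eq_star_mul_self.mp hA.nonneg : ∃ X : M2', A = Xᴴ * X)
  obtain ⟨E, rfl⟩ := (by open scoped MatrixOrder Matrix.Norms.L2Operator in exact CStarAlgebra.nonneg_iff_eq_star_mul_self.mp hB.nonneg : ∃ X : M2', B = Xᴴ * X)
  have key : (Cᴴ * C * (Eᴴ * E)).trace = ((E * Cᴴ)ᴴ * (E * Cᴴ)).trace := by
    rw [conjTranspose_mul, conjTranspose_conjTranspose]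
    rw [show Cᴴ * C * (Eᴴ * E) = Cᴴ * (C * Eᴴ * E) by noncomm_ring]
    rw [Matrix.trace_mul_comm]
    noncomm_ring
  refine ⟨?_, ?_, ?_⟩
  · rw [key, tr_selfmul]; simp
  · rw [key]; exact tr_selfmul_re_nonneg _
  · intro h
    rw [key] at h
    have hz : E * Cᴴ = 0 := tr_selfmul_eq_zero _ h
    have hz' : C * Eᴴ = 0 := by
      have := congrArg conjTranspose hz
      simpa [conjTranspose_mul] using this
    calc Cᴴ * C * (Eᴴ * E) = Cᴴ * (C * Eᴴ) * E := by noncomm_ring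
    _ = 0 := by rw [hz']; simp

lemma psd_trace_real {A B : M2'} (hA : A.PosSemidef) (hB : B.PosSemidef) :
    (A * B).trace = (((A * B).trace.re : ℝ) : ℂ) := (psd_trace_key hA hB).1

lemma psd_trace_nonneg {A B : M2'} (hA : A.PosSemidef) (hB : B.PosSemidef) :
    0 ≤ (A * B).trace.re := (psd_trace_key hA hB).2.1

lemma psd_mul_eq_zero {A B : M2'} (hA : A.PosSemidef) (hB : B.PosSemidef)
    (h : (A * B).trace.re = 0) : A * B = 0 := (psd_trace_key hA hB).2.2 h

lemma ch2 (A : M2') : A * A = A.trace • A - A.det • 1 := by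
  ext i j
  fin_cases i <;> fin_cases j <;>
    simp [Matrix.mul_apply, Fin.sum_univ_two, Matrix.trace_fin_two, Matrix.det_fin_two,
      Matrix.one_apply] <;> ring

lemma det_zero_of_idem {A : M2'} (hA : A * A = A) (htr : A.trace = 1) : A.det = 0 := by
  have h := ch2 A
  rw [hA, htr, one_smul] at h
  have h2 : A.det • (1 : M2') = 0 := sub_eq_self.mp h.symm
  have := congrFun (congrFun h2 0) 0
  simpa [Matrix.one_apply] using this

lemma compress (q X : M2') (hdet : q.det = 0) :
    q * X * q = (q * X).trace • q := by
  have hd : q 0 0 * q 1 1 - q 0 1 * q 1 0 = 0 := by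
    simpa [Matrix.det_fin_two] using hdet
  ext i j
  fin_cases i <;> fin_cases j <;>
    simp [Matrix.mul_apply, Fin.sum_univ_two, Matrix.trace_fin_two, smul_eq_mul]
  · linear_combination (-(X 1 1)) * hd
  · linear_combination (X 0 1) * hd
  · linear_combination (X 1 0) * hd
  · linear_combination (-(X 0 0)) * hd

lemma herm_mul_zero_swap {A B : M2'} (hA : Aᴴ = A) (hB : Bᴴ = B) (h : A * B = 0) :
    B * A = 0 := by
  have := congrArg conjTranspose h
  simpa [conjTranspose_mul, hA, hB] using this

lemma idem_of_state {ρ : M2'} (htr : ρ.trace = 1) (hdet : ρ.det = 0) :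
    ρ * ρ = ρ := by
  rw [ch2, htr, hdet, one_smul, zero_smul, sub_zero]

lemma det_zero_of_mul_zero {ρ σ : M2'} (htrσ : σ.trace = 1) (h : ρ * σ = 0) : ρ.det = 0 := by
  by_contra hd
  have hinv : ρ⁻¹ * ρ = 1 := Matrix.nonsing_inv_mul ρ (Ne.isUnit hd)
  have : σ = 0 := by
    calc σ = ρ⁻¹ * ρ * σ := by rw [hinv, one_mul]
    _ = ρ⁻¹ * (ρ * σ) := by rw [mul_assoc]
    _ = 0 := by rw [h, mul_zero]
  rw [this] at htrσ
  simp at htrσ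

lemma sum_one {ρ σ : M2'} (hρ : ρ.PosSemidef) (htrρ : ρ.trace = 1)
    (hσ : σ.PosSemidef) (htrσ : σ.trace = 1) (h : ρ * σ = 0) :
    ρ + σ = 1 := by
  have hσρ : σ * ρ = 0 := herm_mul_zero_swap hρ.isHermitian hσ.isHermitian h
  have hdρ : ρ.det = 0 := det_zero_of_mul_zero htrσ h
  have hdσ : σ.det = 0 := det_zero_of_mul_zero htrρ hσρ
  have hρ2 : ρ * ρ = ρ := idem_of_state htrρ hdρ
  have hσ2 : σ * σ = σ := idem_of_state htrσ hdσ
  set T : M2' := 1 - ρ - σ with hT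
  have hTh : Tᴴ = T := by
    simp only [hT, conjTranspose_sub, conjTranspose_one]
    rw [hρ.isHermitian.eq, hσ.isHermitian.eq]
  have hT2 : T * T = T := by
    have expand : (1 - ρ - σ) * (1 - ρ - σ)
        = 1 - ρ - σ - ρ + ρ * ρ + ρ * σ - σ + σ * ρ + σ * σ := by noncomm_ring
    rw [hT, expand, hρ2, hσ2, h, hσρ]
    noncomm_ring
  have htrT : T.trace = 0 := by
    simp [hT, Matrix.trace_sub, htrρ, htrσ, Matrix.trace_one]
    norm_num
  have hz : T = 0 := by
    apply tr_selfmul_eq_zero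
    rw [hTh, hT2, htrT]
    simp
  have h0 : (1 : M2') - ρ - σ = 0 := hz
  calc ρ + σ = 1 - ((1 : M2') - ρ - σ) := by noncomm_ring
  _ = 1 := by rw [h0, sub_zero]

lemma trace_mul_smul_re (r N : M2') (c : ℝ) :
    ((r * (c • N)).trace).re = c * ((r * N).trace).re := by
  rw [mul_smul_comm, trace_smul]
  simp [Complex.real_smul, Complex.mul_re]

lemma trace_mul_csmul_re (r N : M2') (c : ℝ) :
    ((r * ((c : ℂ) • N)).trace).re = c * ((r * N).trace).re := by
  rw [mul_smul_comm, trace_smul]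
  simp [Complex.mul_re]

lemma trace_mul_combo_re (r N N' : M2') (c d : ℝ) :
    ((r * (c • N + d • N')).trace).re
      = c * ((r * N).trace).re + d * ((r * N').trace).re := by
  rw [mul_add, trace_add, Complex.add_re, trace_mul_smul_re, trace_mul_smul_re]

lemma trace_effect_le_one {r E : M2'} (hr : r.PosSemidef) (htr : r.trace = 1)
    (hE1 : (1 - E).PosSemidef) : ((r * E).trace).re ≤ 1 := by
  have h := psd_trace_nonneg hr hE1
  have e : (r * (1 - E)).trace = r.trace - (r * E).trace := by
    rw [mul_sub, mul_one, trace_sub]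
  rw [e, htr] at h
  simp [Complex.sub_re] at h
  linarith

end Aux

set_option maxHeartbeats 1000000

/-- For every `D ∈ USD₂ ∩ SIM₂` the witness value `W(D) = -D₁₁ - D₁₂ + D₃₂ + D₃₃`
is nonnegative. -/
theorem witness_nonneg_on_usd2_inter_sim2 (D : Matrix (Fin 3) (Fin 3) ℝ)
    (hU : USD2 D) (hS : SIM2 D) :
    -D 0 0 - D 0 1 + D 2 1 + D 2 2 ≥ 0 := by
  obtain ⟨⟨hD02, hD11, hD12, hD20⟩, -⟩ := hU
  obtain ⟨ρ, A, B, C, F, G, hreal, hsim⟩ := hS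
  obtain ⟨hstates, hEA, hEB, hEC, hsum3, hEF, hEG, hsum2, hP⟩ := hreal
  obtain ⟨p1, p2, p3, N1, N2, N3, hp1, hp2, hp3, hpsum, hN1, hN2, hN3, hAe, hBe, hCe⟩ := hsim
  have hr0 : (ρ 0).PosSemidef := (hstates 0).1
  have htr0 : (ρ 0).trace = 1 := (hstates 0).2
  have hr1 : (ρ 1).PosSemidef := (hstates 1).1
  have htr1 : (ρ 1).trace = 1 := (hstates 1).2
  have hr2 : (ρ 2).PosSemidef := (hstates 2).1
  have htr2 : (ρ 2).trace = 1 := (hstates 2).2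
  -- pattern facts transported to traces
  have f1 : ((ρ 0 * F).trace).re = 0 := by rw [← (hP 0).2.2]; exact hD02
  have f2 : ((ρ 1 * B).trace).re = 0 := by rw [← (hP 1).2.1]; exact hD11
  have f3 : ((ρ 1 * F).trace).re = 1 := by rw [← (hP 1).2.2]; exact hD12
  have f4 : ((ρ 2 * A).trace).re = 0 := by rw [← (hP 2).1]; exact hD20
  -- zero products
  have z1 : ρ 0 * F = 0 := psd_mul_eq_zero hr0 hEF.1 f1
  have z2 : ρ 1 * B = 0 := psd_mul_eq_zero hr1 hEB.1 f2
  have z4 : ρ 2 * A = 0 := psd_mul_eq_zero hr2 hEA.1 f4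
  have z3 : ρ 1 * (1 - F) = 0 := by
    apply psd_mul_eq_zero hr1 hEF.2
    have e : (ρ 1 * (1 - F)).trace = (ρ 1).trace - (ρ 1 * F).trace := by
      rw [mul_sub, mul_one, trace_sub]
    rw [e, htr1]
    simp [Complex.sub_re, f3]
  have zr1F : ρ 1 * F = ρ 1 := by
    have := z3
    rw [mul_sub, mul_one, sub_eq_zero] at this
    exact this.symm
  have zF0 : F * ρ 0 = 0 := herm_mul_zero_swap hr0.isHermitian hEF.1.isHermitian z1
  have z10 : ρ 1 * ρ 0 = 0 := by
    rw [← zr1F, mul_assoc, zF0, mul_zero]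
  have hsum01 : ρ 1 + ρ 0 = 1 := sum_one hr1 htr1 hr0 htr0 z10
  have hF : F = ρ 1 := by
    have zFr1 : F * ρ 1 = ρ 1 := by
      have := congrArg conjTranspose zr1F
      rwa [conjTranspose_mul, hr1.isHermitian.eq, hEF.1.isHermitian.eq] at this
    calc F = 1 * F := by rw [one_mul]
    _ = (ρ 1 + ρ 0) * F := by rw [hsum01]
    _ = ρ 1 * F + ρ 0 * F := by rw [add_mul]
    _ = ρ 1 := by rw [zr1F, z1, add_zero]
  have hr0eq : ρ 0 = 1 - ρ 1 := by
    rw [← hsum01]; noncomm_ring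
  -- compression of B
  have zBr1 : B * ρ 1 = 0 := herm_mul_zero_swap hr1.isHermitian hEB.1.isHermitian z2
  have z01 : ρ 0 * ρ 1 = 0 := herm_mul_zero_swap hr1.isHermitian hr0.isHermitian z10
  have hdet0 : (ρ 0).det = 0 := det_zero_of_mul_zero htr1 z01
  have hB0 : B = ρ 0 * B * ρ 0 := by
    calc B = (ρ 1 + ρ 0) * B * (ρ 1 + ρ 0) := by rw [hsum01]; noncomm_ring
    _ = (ρ 0 * B) * (ρ 1 + ρ 0) := by rw [add_mul, z2, zero_add]
    _ = ρ 0 * (B * ρ 1) + ρ 0 * B * ρ 0 := by rw [mul_add, mul_assoc]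
    _ = ρ 0 * B * ρ 0 := by rw [zBr1, mul_zero, zero_add]
  set m : ℝ := ((ρ 0 * B).trace).re with hm
  have hmre : (ρ 0 * B).trace = (m : ℂ) := psd_trace_real hr0 hEB.1
  have hBm : B = (m : ℂ) • ρ 0 := by
    rw [hB0, compress _ _ hdet0, hmre]
  have hm0 : 0 ≤ m := psd_trace_nonneg hr0 hEB.1
  have hm1 : m ≤ 1 := trace_effect_le_one hr0 htr0 hEB.2
  set t : ℝ := ((ρ 2 * ρ 1).trace).re with ht
  have ht0 : 0 ≤ t := psd_trace_nonneg hr2 hr1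
  -- value of D 2 1
  have h20tr : ((ρ 2 * ρ 0).trace).re = 1 - t := by
    have e : ρ 2 * ρ 0 = ρ 2 - ρ 2 * ρ 1 := by
      rw [hr0eq, mul_sub, mul_one]
    rw [e, trace_sub, Complex.sub_re, htr2]
    simp [ht]
  have hD21 : D 2 1 = m * (1 - t) := by
    rw [(hP 2).2.1, hBm, trace_mul_csmul_re, h20tr]
  have hD22 : D 2 2 = t := by
    rw [(hP 2).2.2, hF]
  have hD01 : D 0 1 = m := (hP 0).2.1
  have hD00 : D 0 0 = ((ρ 0 * A).trace).re := (hP 0).1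
  -- simulability constraints
  have hcB : p1 * ((ρ 1 * (1 - N1)).trace).re + p2 * ((ρ 1 * N2).trace).re = 0 := by
    rw [← trace_mul_combo_re, ← hBe]; exact f2
  have hcA : p1 * ((ρ 2 * N1).trace).re + p3 * ((ρ 2 * N3).trace).re = 0 := by
    rw [← trace_mul_combo_re, ← hAe]; exact f4
  have hB1 := psd_trace_nonneg hr1 hN1.2
  have hB2 := psd_trace_nonneg hr1 hN2.1
  have hA1 := psd_trace_nonneg hr2 hN1.1
  have hA3 := psd_trace_nonneg hr2 hN3.1
  have key : ((ρ 0 * A).trace).re ≤ t * (1 - m) := by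
    by_cases hp1z : p1 = 0
    · -- p1 = 0
      have hAp3 : A = p3 • N3 := by rw [hAe, hp1z]; simp
      have hBp2 : B = p2 • N2 := by rw [hBe, hp1z]; simp
      have hmn2 : m = p2 * ((ρ 0 * N2).trace).re := by
        rw [hm, hBp2, trace_mul_smul_re]
      have hn2le : ((ρ 0 * N2).trace).re ≤ 1 := trace_effect_le_one hr0 htr0 hN2.2
      have hn2ge : 0 ≤ ((ρ 0 * N2).trace).re := psd_trace_nonneg hr0 hN2.1
      have hmp2 : m ≤ p2 := by nlinarith
      by_cases hp3z : p3 = 0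
      · have : A = 0 := by rw [hAp3, hp3z]; simp
        rw [this, mul_zero]
        simp only [Matrix.trace_zero, Complex.zero_re]
        nlinarith
      · have hp3pos : 0 < p3 := lt_of_le_of_ne hp3 (Ne.symm hp3z)
        have hc3 : ((ρ 2 * N3).trace).re = 0 := by
          rw [hp1z] at hcA
          simp at hcA
          rcases hcA with h | h
          · exact absurd h hp3z
          · exact h
        have zr2N3 : ρ 2 * N3 = 0 := psd_mul_eq_zero hr2 hN3.1 hc3
        have zN3r2 : N3 * ρ 2 = 0 :=
          herm_mul_zero_swap hr2.isHermitian hN3.1.isHermitian zr2N3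
        by_cases hdet2 : (ρ 2).det = 0
        · -- ρ 2 is a rank-one projection
          have hr2idem : ρ 2 * ρ 2 = ρ 2 := idem_of_state htr2 hdet2
          set q : Matrix (Fin 2) (Fin 2) ℂ := 1 - ρ 2 with hq
          have hq2 : q * q = q := by
            have expand : ((1 : Matrix (Fin 2) (Fin 2) ℂ) - ρ 2) * (1 - ρ 2)
                = 1 - ρ 2 - ρ 2 + ρ 2 * ρ 2 := by noncomm_ring
            rw [hq, expand, hr2idem]
            noncomm_ring
          have hqherm : qᴴ = q := by
            simp only [hq, conjTranspose_sub, conjTranspose_one]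
            rw [hr2.isHermitian.eq]
          have hqpsd : q.PosSemidef := by
            have h := Matrix.posSemidef_conjTranspose_mul_self q
            rwa [hqherm, hq2] at h
          have htrq : q.trace = 1 := by
            simp [hq, Matrix.trace_sub, htr2, Matrix.trace_one]
            norm_num
          have hdetq : q.det = 0 := det_zero_of_idem hq2 htrq
          have hN3q : N3 = q * N3 * q := by
            have e1 : q * N3 = N3 := by
              rw [hq, sub_mul, one_mul, zr2N3, sub_zero]
            have e2 : N3 * q = N3 := by
              rw [hq, mul_sub, mul_one, zN3r2, sub_zero]
            rw [e1, e2]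
          have hN3comp : N3 = (q * N3).trace • q := by
            have h := compress q N3 hdetq
            rw [← hN3q] at h
            exact h
          set l : ℝ := ((q * N3).trace).re with hl
          have hlre : (q * N3).trace = (l : ℂ) := psd_trace_real hqpsd hN3.1
          have hl0 : 0 ≤ l := psd_trace_nonneg hqpsd hN3.1
          have hl1 : l ≤ 1 := trace_effect_le_one hqpsd htrq hN3.2
          have hN3l : N3 = (l : ℂ) • q := by rw [hN3comp, hlre]
          have hq_r0 : ((ρ 0 * q).trace).re = t := by
            have e1 : ρ 0 * q = ρ 0 - ρ 0 * ρ 2 := by rw [hq, mul_sub, mul_one]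
            have e2 : ρ 0 * ρ 2 = ρ 2 - ρ 1 * ρ 2 := by
              rw [hr0eq, sub_mul, one_mul]
            rw [e1, e2, trace_sub, trace_sub, Complex.sub_re, Complex.sub_re,
                htr0, htr2, Matrix.trace_mul_comm]
            simp [ht]
          have hD00v : ((ρ 0 * A).trace).re = p3 * (l * t) := by
            rw [hAp3, trace_mul_smul_re, hN3l, trace_mul_csmul_re, hq_r0]
          rw [hD00v]
          have hfact1 : 0 ≤ p3 * (t * (1 - l)) :=
            mul_nonneg hp3 (mul_nonneg ht0 (by linarith))
          have hfact2 : 0 ≤ t * (p2 - m) := mul_nonneg ht0 (by linarith)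
          nlinarith [hpsum, hp1z]
        · -- ρ 2 invertible : N3 = 0
          have hinv : (ρ 2)⁻¹ * ρ 2 = 1 := Matrix.nonsing_inv_mul _ (Ne.isUnit hdet2)
          have hN3z : N3 = 0 := by
            calc N3 = (ρ 2)⁻¹ * ρ 2 * N3 := by rw [hinv, one_mul]
            _ = (ρ 2)⁻¹ * (ρ 2 * N3) := by rw [mul_assoc]
            _ = 0 := by rw [zr2N3, mul_zero]
          have : A = 0 := by rw [hAp3, hN3z]; simp
          rw [this, mul_zero]
          simp only [Matrix.trace_zero, Complex.zero_re]
          nlinarith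
    · -- p1 > 0
      have hp1pos : 0 < p1 := lt_of_le_of_ne hp1 (Ne.symm hp1z)
      have ha0 : ((ρ 1 * (1 - N1)).trace).re = 0 := by
        have h1 := mul_nonneg hp1 hB1
        have h2 := mul_nonneg hp2 hB2
        have hpa : p1 * ((ρ 1 * (1 - N1)).trace).re = 0 := by linarith
        exact (mul_eq_zero.mp hpa).resolve_left hp1z
      have hc0 : ((ρ 2 * N1).trace).re = 0 := by
        have h1 := mul_nonneg hp1 hA1
        have h2 := mul_nonneg hp3 hA3
        have hpa : p1 * ((ρ 2 * N1).trace).re = 0 := by linarith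
        exact (mul_eq_zero.mp hpa).resolve_left hp1z
      have zr1N1 : ρ 1 * (1 - N1) = 0 := psd_mul_eq_zero hr1 hN1.2 ha0
      have hr1N1 : ρ 1 * N1 = ρ 1 := by
        have := zr1N1
        rw [mul_sub, mul_one, sub_eq_zero] at this
        exact this.symm
      have hN1r1 : N1 * ρ 1 = ρ 1 := by
        have := congrArg conjTranspose hr1N1
        rwa [conjTranspose_mul, hr1.isHermitian.eq, hN1.1.isHermitian.eq] at this
      have zr2N1 : ρ 2 * N1 = 0 := psd_mul_eq_zero hr2 hN1.1 hc0
      have z21 : ρ 2 * ρ 1 = 0 := by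
        rw [← hN1r1, ← mul_assoc, zr2N1, zero_mul]
      have htz : t = 0 := by rw [ht, z21]; simp
      have hsum21 : ρ 2 + ρ 1 = 1 := sum_one hr2 htr2 hr1 htr1 z21
      have hr2eq : ρ 2 = ρ 0 := by
        have e1 : ρ 2 = 1 - ρ 1 := by rw [← hsum21]; noncomm_ring
        rw [e1, ← hr0eq]
      have zr0A : ρ 0 * A = 0 := by rw [← hr2eq]; exact z4
      rw [zr0A, htz]
      simp
  -- conclude
  rw [hD00, hD01, hD21, hD22]
  nlinarith [key]
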